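/- Let K be a free ℤ₂ simplicial complex such that for a family of vertex subsets {W_σ} indexed by the vertices σ of a ℤ₂-simplicial complex L of dimension k+1, each induced subcomplex K[W_σ] is k-connected, W_{-σ} = -W_σ, and W_{σ₁} ⊆ W_{σ₂} whenever σ₁ ≤ σ₂ in the order defining simplices of L (simplices of L are chains σ₀ < ⋯ < σ_i). Then there exists a continuous ℤ₂-map f : |L| → |K| such that the image of each simplex σ₀ < ⋯ < σ_i lies in |K[W_{σ_i}]|. -/

import Mathlib

open scoped Classical

/-- The geometric realization of an abstract simplicial complex `K` on a finite vertex
set `V`. -/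
noncomputable def realization {V : Type*} [Fintype V] (K : Finset V → Prop) :
    Set (V → ℝ) :=
  {f | (∀ v, 0 ≤ f v) ∧ (∑ v, f v) = 1 ∧ K (Finset.univ.filter fun v => f v ≠ 0)}

/-- A subspace `X` of `V → ℝ` is `k`-connected: it is nonempty and every continuous
map `S^n → X` with `n ≤ k` extends continuously to the disk `D^{n+1}`. -/
def KConnected {V : Type*} [Fintype V] (X : Set (V → ℝ)) (k : ℕ) : Prop :=
  X.Nonempty ∧ ∀ n : ℕ, n ≤ k →
    ∀ f : C(Metric.sphere (0 : EuclideanSpace ℝ (Fin (n + 1))) 1, X),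
      ∃ g : C(Metric.closedBall (0 : EuclideanSpace ℝ (Fin (n + 1))) 1, X),
        ∀ x : Metric.sphere (0 : EuclideanSpace ℝ (Fin (n + 1))) 1,
          g ⟨x.1, Metric.sphere_subset_closedBall x.2⟩ = f x

namespace EqvAux


variable {P : Type*} [Fintype P]

/-- The closed geometric face spanned by the finite set `G`. -/
def face (G : Finset P) : Set (P → ℝ) :=
  {x | (∀ a, 0 ≤ x a) ∧ (∑ a, x a) = 1 ∧ ∀ a, x a ≠ 0 → a ∈ G}

/-- The boundary of the face `G`. -/
def bdry (G : Finset P) : Set (P → ℝ) := {x ∈ face G | ∃ a ∈ G, x a = 0}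

/-- The support of a point. -/
noncomputable def supp (x : P → ℝ) : Finset P := Finset.univ.filter (x · ≠ 0)

lemma mem_supp {x : P → ℝ} {a : P} : a ∈ supp x ↔ x a ≠ 0 := by
  simp [supp]

lemma isClosed_face (G : Finset P) : IsClosed (face G) := by
  have h1 : IsClosed {x : P → ℝ | ∀ a, 0 ≤ x a} := by
    have : {x : P → ℝ | ∀ a, 0 ≤ x a} = ⋂ a : P, {x | 0 ≤ x a} := by
      ext x; simp
    rw [this]
    exact isClosed_iInter fun a => isClosed_le continuous_const (continuous_apply a)
  have h2 : IsClosed {x : P → ℝ | (∑ a, x a) = 1} :=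
    isClosed_eq (by continuity) continuous_const
  have h3 : IsClosed {x : P → ℝ | ∀ a, x a ≠ 0 → a ∈ G} := by
    have : {x : P → ℝ | ∀ a, x a ≠ 0 → a ∈ G} = ⋂ (a : P) (_ : a ∉ G), {x | x a = 0} := by
      ext x; simp only [Set.mem_setOf_eq, Set.mem_iInter]
      constructor
      · intro h a ha; by_contra h0; exact ha (h a h0)
      · intro h a hxa; by_contra hna; exact hxa (h a hna)
    rw [this]
    exact isClosed_iInter fun a => isClosed_iInter fun _ =>
      isClosed_eq (continuous_apply a) continuous_const
  have : face G = {x : P → ℝ | ∀ a, 0 ≤ x a} ∩ ({x | (∑ a, x a) = 1} ∩ {x | ∀ a, x a ≠ 0 → a ∈ G}) := by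
    ext x
    simp only [face, Set.mem_setOf_eq, Set.mem_inter_iff, and_assoc]
  rw [this]; exact h1.inter (h2.inter h3)

lemma face_mono {H G : Finset P} (h : H ⊆ G) : face H ⊆ face G :=
  fun x ⟨h1, h2, h3⟩ => ⟨h1, h2, fun a ha => h (h3 a ha)⟩

lemma supp_subset_of_mem_face {G : Finset P} {x : P → ℝ} (hx : x ∈ face G) : supp x ⊆ G :=
  fun a ha => hx.2.2 a (mem_supp.1 ha)

lemma mem_face_supp {G : Finset P} {x : P → ℝ} (hx : x ∈ face G) : x ∈ face (supp x) :=
  ⟨hx.1, hx.2.1, fun a ha => mem_supp.2 ha⟩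

lemma supp_nonempty {G : Finset P} {x : P → ℝ} (hx : x ∈ face G) : (supp x).Nonempty := by
  by_contra h
  rw [Finset.not_nonempty_iff_eq_empty] at h
  have : (∑ a, x a) = 0 := by
    apply Finset.sum_eq_zero
    intro a _
    by_contra ha
    have : a ∈ supp x := mem_supp.2 ha
    simp [h] at this
  rw [hx.2.1] at this; norm_num at this

lemma mem_bdry {G : Finset P} {x : P → ℝ} :
    x ∈ bdry G ↔ x ∈ face G ∧ ∃ a ∈ G, x a = 0 := Iff.rfl

lemma face_erase_subset_bdry {G : Finset P} {a : P} (ha : a ∈ G) :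
    face (G.erase a) ⊆ bdry G := by
  intro x hx
  refine ⟨face_mono (G.erase_subset a) hx, a, ha, ?_⟩
  by_contra h
  exact (G.notMem_erase a) (hx.2.2 a h)

lemma bdry_eq_iUnion (G : Finset P) :
    bdry G = ⋃ a : P, (if a ∈ G then face (G.erase a) else ∅) := by
  ext x
  simp only [Set.mem_iUnion]
  constructor
  · rintro ⟨hx, a, ha, hxa⟩
    refine ⟨a, ?_⟩
    rw [if_pos ha]
    exact ⟨hx.1, hx.2.1, fun b hb => Finset.mem_erase.2 ⟨fun h => hb (by rw [h]; exact hxa), hx.2.2 b hb⟩⟩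
  · rintro ⟨a, hx⟩
    by_cases ha : a ∈ G
    · rw [if_pos ha] at hx
      exact face_erase_subset_bdry ha hx
    · rw [if_neg ha] at hx; exact hx.elim





lemma sum_comp_involutive {ν : P → P} (hν : Function.Involutive ν) (x : P → ℝ) :
    (∑ a, x (ν a)) = ∑ a, x a :=
  Fintype.sum_equiv hν.toPerm _ _ (fun _ => rfl)

lemma filter_comp_involutive {ν : P → P} (hν : Function.Involutive ν) (x : P → ℝ) :
    (Finset.univ.filter fun a => x (ν a) ≠ 0) =
      (Finset.univ.filter fun a => x a ≠ 0).image ν := by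
  ext b
  simp only [Finset.mem_filter, Finset.mem_image, Finset.mem_univ, true_and]
  constructor
  · intro h; exact ⟨ν b, h, hν b⟩
  · rintro ⟨a, ha, rfl⟩; rwa [hν a]

variable [PartialOrder P]

/-- A nonempty finite chain has a greatest element. -/
lemma chain_exists_max {G : Finset P} (hch : IsChain (· ≤ ·) (G : Set P))
    (hne : G.Nonempty) : ∃ m ∈ G, ∀ a ∈ G, a ≤ m := by
  classical
  induction G using Finset.induction_on with
  | empty => exact absurd hne (by simp)
  | @insert b s hnotmem ih =>
    by_cases hs : s.Nonempty
    · have hch' : IsChain (· ≤ ·) (s : Set P) := by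
        refine IsChain.mono ?_ hch; intro a ha; simp only [Finset.coe_insert, Set.mem_insert_iff]
        right; exact_mod_cast ha
      obtain ⟨m, hm, hmax⟩ := ih hch' hs
      have hbm : b ≤ m ∨ m ≤ b := by
        rcases hch (by simp : b ∈ ((insert b s : Finset P) : Set P))
          (by simp [hm] : m ∈ ((insert b s : Finset P) : Set P))
          (fun h => hnotmem (h ▸ hm)) with h | h
        · exact Or.inl h
        · exact Or.inr h
      rcases hbm with h | h
      · exact ⟨m, Finset.mem_insert_of_mem hm, by
          intro a ha
          rcases Finset.mem_insert.1 ha with rfl | ha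
          · exact h
          · exact hmax a ha⟩
      · exact ⟨b, Finset.mem_insert_self b s, by
          intro a ha
          rcases Finset.mem_insert.1 ha with rfl | ha
          · exact le_refl a
          · exact (hmax a ha).trans h⟩
    · rw [Finset.not_nonempty_iff_eq_empty] at hs
      subst hs
      exact ⟨b, by simp, by intro a ha; simp at ha; subst ha; exact le_refl a⟩

variable {νP : P → P}

lemma image_chain (hνPmono : Monotone νP) {G : Finset P}
    (hch : IsChain (· ≤ ·) (G : Set P)) : IsChain (· ≤ ·) ((G.image νP : Finset P) : Set P) := by
  intro a ha b hb hab
  simp only [Finset.coe_image, Set.mem_image, Finset.mem_coe] at ha hb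
  obtain ⟨a', ha', rfl⟩ := ha
  obtain ⟨b', hb', rfl⟩ := hb
  by_cases h : a' = b'
  · subst h; exact absurd rfl hab
  · rcases hch (by exact_mod_cast ha') (by exact_mod_cast hb') h with h' | h'
    · exact Or.inl (hνPmono h')
    · exact Or.inr (hνPmono h')

lemma image_image_involutive (hνP : Function.Involutive νP) (G : Finset P) :
    (G.image νP).image νP = G := by
  rw [Finset.image_image]
  have : νP ∘ νP = id := funext hνP
  rw [this, Finset.image_id]

lemma image_ne_self (hνP : Function.Involutive νP)
    (hPfree : ∀ G : Finset P, IsChain (· ≤ ·) (G : Set P) → G.Nonempty →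
      Disjoint G (G.image νP))
    {G : Finset P} (hch : IsChain (· ≤ ·) (G : Set P)) (hne : G.Nonempty) :
    G.image νP ≠ G := by
  intro h
  have := hPfree G hch hne
  rw [h] at this
  exact hne.ne_empty (disjoint_self.1 this)

/-- A sign function on `Finset P` that flips under the (free-on-chains) involution. -/
noncomputable def sgn (νP : P → P) (G : Finset P) : Bool :=
  decide ((Fintype.equivFin (Finset P)) G < (Fintype.equivFin (Finset P)) (G.image νP))

lemma sgn_flip (hνP : Function.Involutive νP)
    {G : Finset P} (hne : G.image νP ≠ G) :
    sgn νP (G.image νP) = ! sgn νP G := by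
  unfold sgn
  rw [image_image_involutive hνP]
  have hne' : (Fintype.equivFin (Finset P)) G ≠ (Fintype.equivFin (Finset P)) (G.image νP) := by
    intro h; exact hne (((Fintype.equivFin (Finset P)).injective h).symm)
  rcases lt_or_gt_of_ne hne' with h | h
  · simp [h, not_lt_of_gt h]
  · simp [h, not_lt_of_gt h]



noncomputable section

variable (n : ℕ)

abbrev Euc (n : ℕ) := EuclideanSpace ℝ (Fin (n + 1))

/-- The "corner simplex" in Euclidean space. -/
def Tset : Set (Euc n) := {y | (∀ i, 0 ≤ y i) ∧ (∑ i, y i) ≤ 1}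

/-- Its combinatorial boundary. -/
def Tbdry : Set (Euc n) := {y ∈ Tset n | (∃ i, y i = 0) ∨ (∑ i, y i) = 1}

/-- Its combinatorial interior. -/
def Tint : Set (Euc n) := {y | (∀ i, 0 < y i) ∧ (∑ i, y i) < 1}

lemma coord_continuous (i : Fin (n + 1)) : Continuous fun y : Euc n => y i :=
  (EuclideanSpace.proj (𝕜 := ℝ) i).continuous

lemma sum_continuous : Continuous fun y : Euc n => ∑ i, y i :=
  continuous_finset_sum _ fun i _ => coord_continuous n i

lemma smul_add_coord (a b : ℝ) (y z : Euc n) (i : Fin (n + 1)) :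
    (a • y + b • z) i = a * y i + b * z i := by
  rw [PiLp.add_apply, PiLp.smul_apply, PiLp.smul_apply, smul_eq_mul, smul_eq_mul]

lemma isClosed_Tset : IsClosed (Tset n) := by
  have : Tset n = (⋂ i, {y : Euc n | 0 ≤ y i}) ∩ {y | (∑ i, y i) ≤ 1} := by
    ext y; simp [Tset, Set.mem_iInter]
  rw [this]
  exact (isClosed_iInter fun i =>
    isClosed_le continuous_const (coord_continuous n i)).inter
    (isClosed_le (sum_continuous n) continuous_const)

lemma convex_Tset : Convex ℝ (Tset n) := by
  intro y hy z hz a b ha hb hab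
  constructor
  · intro i
    rw [smul_add_coord]
    exact add_nonneg (mul_nonneg ha (hy.1 i)) (mul_nonneg hb (hz.1 i))
  · have hs : (∑ i, (a • y + b • z) i) = a * (∑ i, y i) + b * (∑ i, z i) := by
      simp only [smul_add_coord, Finset.sum_add_distrib, Finset.mul_sum]
    rw [hs]
    calc a * (∑ i, y i) + b * (∑ i, z i) ≤ a * 1 + b * 1 := by
          gcongr
          · exact hy.2
          · exact hz.2
      _ = 1 := by rw [mul_one, mul_one, hab]

lemma bounded_Tset : Bornology.IsBounded (Tset n) := by
  rw [Metric.isBounded_iff_subset_closedBall 0]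
  refine ⟨Real.sqrt (n + 1), fun y hy => ?_⟩
  rw [Metric.mem_closedBall, dist_zero_right, EuclideanSpace.norm_eq]
  have hcoord : ∀ i, ‖y i‖ ≤ 1 := by
    intro i
    rw [Real.norm_eq_abs, abs_of_nonneg (hy.1 i)]
    calc y i ≤ ∑ j, y j := Finset.single_le_sum (fun j _ => hy.1 j) (Finset.mem_univ i)
      _ ≤ 1 := hy.2
  apply Real.sqrt_le_sqrt
  calc (∑ i, ‖y i‖ ^ 2) ≤ ∑ _i : Fin (n + 1), (1 : ℝ) := by
        apply Finset.sum_le_sum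
        intro i _
        have := hcoord i
        nlinarith [norm_nonneg (y i)]
    _ = (n + 1 : ℝ) := by simp
    _ ≤ (n + 1 : ℝ) := le_refl _

lemma isOpen_Tint : IsOpen (Tint n) := by
  have : Tint n = (⋂ i, {y : Euc n | 0 < y i}) ∩ {y | (∑ i, y i) < 1} := by
    ext y; simp [Tint, Set.mem_iInter]
  rw [this]
  exact ((isOpen_iInter_of_finite fun i =>
    isOpen_lt continuous_const (coord_continuous n i)).inter
    (isOpen_lt (sum_continuous n) continuous_const))

lemma Tint_subset : Tint n ⊆ Tset n := fun y hy => ⟨fun i => (hy.1 i).le, hy.2.le⟩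

lemma Tint_nonempty : (Tint n).Nonempty := by
  refine ⟨(WithLp.equiv 2 _).symm (fun _ => (1 : ℝ) / (2 * (n + 1))), ?_, ?_⟩
  · intro i
    show (0 : ℝ) < 1 / (2 * (n + 1))
    positivity
  · show (∑ _i : Fin (n + 1), (1 : ℝ) / (2 * (n + 1))) < 1
    rw [Finset.sum_const, Finset.card_univ, Fintype.card_fin, nsmul_eq_mul]
    rw [mul_one_div]
    rw [div_lt_one (by positivity)]
    push_cast
    linarith

/-- A point of `Tset` not in `Tint` is not in the interior. -/
lemma not_interior_of_bdry {y : Euc n} (hy : y ∈ Tset n) (hb : y ∉ Tint n) :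
    y ∉ interior (Tset n) := by
  intro hint
  have hnbd : Tset n ∈ nhds y := mem_interior_iff_mem_nhds.1 hint
  have hcases : (∃ i, y i = 0) ∨ (∑ i, y i) = 1 := by
    by_contra h
    push_neg at h
    exact hb ⟨fun i => lt_of_le_of_ne (hy.1 i) (Ne.symm (h.1 i)), lt_of_le_of_ne hy.2 h.2⟩
  rcases hcases with ⟨i, hi⟩ | hsum
  · -- move in direction -e_i
    set w : Euc n := (WithLp.equiv 2 _).symm (fun j => if j = i then (1:ℝ) else 0) with hw
    have hcurve : Filter.Tendsto (fun t : ℝ => y - t • w) (nhdsWithin 0 (Set.Ioi 0)) (nhds y) := by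
      have : Filter.Tendsto (fun t : ℝ => y - t • w) (nhds 0) (nhds y) := by
        have hcont : Continuous fun t : ℝ => y - t • w :=
          continuous_const.sub (continuous_id.smul continuous_const)
        have := hcont.tendsto 0
        simpa using this
      exact this.mono_left nhdsWithin_le_nhds
    have hev : ∀ᶠ t in nhdsWithin (0:ℝ) (Set.Ioi 0), (y - t • w) ∈ Tset n :=
      hcurve.eventually_mem hnbd
    have hpos : ∀ᶠ t in nhdsWithin (0:ℝ) (Set.Ioi 0), t ∈ Set.Ioi (0:ℝ) :=
      eventually_mem_nhdsWithin
    obtain ⟨t, hmem, ht⟩ := (hev.and hpos).exists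
    have : (y - t • w) i = -t := by
      rw [PiLp.sub_apply, PiLp.smul_apply, hi, smul_eq_mul]
      have : w i = 1 := by
        show (if i = i then (1:ℝ) else 0) = 1
        simp
      rw [this, mul_one, zero_sub]
    have h0 := hmem.1 i
    rw [this] at h0
    have : (0:ℝ) < t := ht
    linarith
  · -- move in direction +1
    set w : Euc n := (WithLp.equiv 2 _).symm (fun _ => (1 : ℝ)) with hw
    have hcurve : Filter.Tendsto (fun t : ℝ => y + t • w) (nhdsWithin 0 (Set.Ioi 0)) (nhds y) := by
      have : Filter.Tendsto (fun t : ℝ => y + t • w) (nhds 0) (nhds y) := by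
        have hcont : Continuous fun t : ℝ => y + t • w :=
          continuous_const.add (continuous_id.smul continuous_const)
        have := hcont.tendsto 0
        simpa using this
      exact this.mono_left nhdsWithin_le_nhds
    have hev : ∀ᶠ t in nhdsWithin (0:ℝ) (Set.Ioi 0), (y + t • w) ∈ Tset n :=
      hcurve.eventually_mem hnbd
    have hpos : ∀ᶠ t in nhdsWithin (0:ℝ) (Set.Ioi 0), t ∈ Set.Ioi (0:ℝ) :=
      eventually_mem_nhdsWithin
    obtain ⟨t, hmem, ht⟩ := (hev.and hpos).exists
    have hsum' : (∑ j, (y + t • w) j) = 1 + t * (n + 1) := by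
      have : ∀ j, (y + t • w) j = y j + t := by
        intro j
        rw [PiLp.add_apply, PiLp.smul_apply, smul_eq_mul]
        have : w j = 1 := rfl
        rw [this, mul_one]
      simp only [this, Finset.sum_add_distrib, hsum, Finset.sum_const, Finset.card_univ,
        Fintype.card_fin, nsmul_eq_mul]
      push_cast
      ring
    have := hmem.2
    rw [hsum'] at this
    have ht' : (0:ℝ) < t := ht
    nlinarith

lemma interior_Tset : interior (Tset n) = Tint n := by
  apply Set.Subset.antisymm
  · intro y hy
    by_contra hb
    exact not_interior_of_bdry n (interior_subset hy) hb hy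
  · exact (isOpen_Tint n).subset_interior_iff.2 (Tint_subset n)

lemma frontier_Tset : frontier (Tset n) = Tbdry n := by
  rw [frontier, (isClosed_Tset n).closure_eq, interior_Tset]
  ext y
  simp only [Set.mem_diff, Tbdry, Set.mem_setOf_eq, Tint, Tset]
  constructor
  · rintro ⟨hy, hni⟩
    refine ⟨hy, ?_⟩
    by_contra h
    push_neg at h
    exact hni ⟨fun i => lt_of_le_of_ne (hy.1 i) (Ne.symm (h.1 i)), lt_of_le_of_ne hy.2 h.2⟩
  · rintro ⟨hy, h⟩
    refine ⟨hy, ?_⟩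
    rintro ⟨hpos, hlt⟩
    rcases h with ⟨i, hi⟩ | hs
    · exact (hpos i).ne' hi
    · exact hlt.ne hs

end

noncomputable section

variable (n : ℕ) (G : Finset P) (e : Fin (n + 2) ≃ {a : P // a ∈ G})

/-- Chart to Euclidean space: forget the last barycentric coordinate. -/
def chartA (x : P → ℝ) : Euc n :=
  (WithLp.equiv 2 _).symm (fun i : Fin (n + 1) => x (e i.castSucc))

/-- The inverse chart. -/
def chartB (y : Euc n) : P → ℝ := fun a =>
  if h : a ∈ G then
    Fin.lastCases (1 - ∑ i, y i) (fun i : Fin (n + 1) => y i) (e.symm ⟨a, h⟩)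
  else 0

lemma chartA_apply (x : P → ℝ) (i : Fin (n + 1)) : chartA n G e x i = x (e i.castSucc) := rfl

lemma chartA_continuous : Continuous (chartA n G e) := by
  show Continuous
    ((PiLp.continuousLinearEquiv 2 ℝ (fun _ : Fin (n+1) => ℝ)).symm ∘
      (fun (x : P → ℝ) (i : Fin (n + 1)) => x (e i.castSucc)))
  exact (PiLp.continuousLinearEquiv 2 ℝ _).symm.continuous.comp
    (continuous_pi fun i => continuous_apply _)

lemma chartB_not_mem (y : Euc n) {a : P} (ha : a ∉ G) : chartB n G e y a = 0 := by
  simp [chartB, ha]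

lemma chartB_apply_mem (y : Euc n) {a : P} (ha : a ∈ G) :
    chartB n G e y a =
      Fin.lastCases (1 - ∑ i, y i) (fun i : Fin (n + 1) => y i) (e.symm ⟨a, ha⟩) := by
  simp [chartB, ha]

lemma chartB_castSucc (y : Euc n) (i : Fin (n + 1)) :
    chartB n G e y (e i.castSucc) = y i := by
  rw [chartB_apply_mem n G e y (e i.castSucc).2]
  have h1 : (⟨(e i.castSucc : {a : P // a ∈ G}), (e i.castSucc).2⟩ : {a : P // a ∈ G})
      = e i.castSucc := Subtype.coe_eta _ _
  rw [h1, e.symm_apply_apply]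
  exact Fin.lastCases_castSucc _

lemma chartB_last (y : Euc n) :
    chartB n G e y (e (Fin.last (n + 1))) = 1 - ∑ i, y i := by
  rw [chartB_apply_mem n G e y (e (Fin.last (n + 1))).2]
  have h1 : (⟨(e (Fin.last (n+1)) : {a : P // a ∈ G}), (e (Fin.last (n+1))).2⟩ : {a : P // a ∈ G})
      = e (Fin.last (n+1)) := Subtype.coe_eta _ _
  rw [h1, e.symm_apply_apply]
  exact Fin.lastCases_last

lemma chartB_continuous : Continuous (chartB n G e) := by
  apply continuous_pi
  intro a
  by_cases ha : a ∈ G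
  · have : (fun y : Euc n => chartB n G e y a) =
        fun y => Fin.lastCases (1 - ∑ i, y i) (fun i : Fin (n + 1) => y i) (e.symm ⟨a, ha⟩) := by
      funext y; rw [chartB_apply_mem n G e y ha]
    rw [this]
    rcases Fin.eq_castSucc_or_eq_last (e.symm ⟨a, ha⟩) with ⟨j, hj⟩ | hj
    · rw [hj]
      simp only [Fin.lastCases_castSucc]
      exact coord_continuous n j
    · rw [hj]
      simp only [Fin.lastCases_last]
      exact continuous_const.sub (sum_continuous n)
  · have : (fun y : Euc n => chartB n G e y a) = fun _ => 0 := by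
      funext y; rw [chartB_not_mem n G e y ha]
    rw [this]
    exact continuous_const

/-- Sum over the finset via the equivalence. -/
lemma sum_via_equiv (x : P → ℝ) : (∑ j : Fin (n + 2), x (e j)) = ∑ a ∈ G, x a := by
  rw [← Finset.sum_coe_sort G x]
  exact Fintype.sum_equiv e _ _ (fun j => rfl)

lemma sum_face {x : P → ℝ} (hx : x ∈ face G) : (∑ a ∈ G, x a) = 1 := by
  rw [← hx.2.1]
  exact Finset.sum_subset G.subset_univ (fun a _ ha => by
    by_contra h0
    exact ha (hx.2.2 a h0))

lemma sum_castSucc_face {x : P → ℝ} (hx : x ∈ face G) :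
    (∑ i : Fin (n + 1), x (e i.castSucc)) = 1 - x (e (Fin.last (n + 1))) := by
  have h := sum_via_equiv n G e x
  rw [Fin.sum_univ_castSucc] at h
  rw [sum_face G hx] at h
  linarith

lemma chartA_mem_Tset {x : P → ℝ} (hx : x ∈ face G) : chartA n G e x ∈ Tset n := by
  constructor
  · intro i; exact hx.1 _
  · have := sum_castSucc_face n G e hx
    have hlast : 0 ≤ x (e (Fin.last (n + 1))) := hx.1 _
    show (∑ i : Fin (n+1), chartA n G e x i) ≤ 1
    simp only [chartA_apply]
    linarith

lemma chartB_mem_face {y : Euc n} (hy : y ∈ Tset n) : chartB n G e y ∈ face G := by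
  refine ⟨?_, ?_, ?_⟩
  · intro a
    by_cases ha : a ∈ G
    · rw [chartB_apply_mem n G e y ha]
      rcases Fin.eq_castSucc_or_eq_last (e.symm ⟨a, ha⟩) with ⟨j, hj⟩ | hj <;> rw [hj]
      · rw [Fin.lastCases_castSucc]; exact hy.1 j
      · rw [Fin.lastCases_last]; linarith [hy.2]
    · rw [chartB_not_mem n G e y ha]
  · have h1 : (∑ a, chartB n G e y a) = ∑ a ∈ G, chartB n G e y a :=
      (Finset.sum_subset G.subset_univ (fun a _ ha => chartB_not_mem n G e y ha)).symm
    rw [h1, ← sum_via_equiv n G e, Fin.sum_univ_castSucc]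
    simp only [chartB_castSucc, chartB_last]
    ring
  · intro a ha
    by_contra h
    exact ha (chartB_not_mem n G e y h)

lemma chartB_chartA {x : P → ℝ} (hx : x ∈ face G) : chartB n G e (chartA n G e x) = x := by
  funext a
  by_cases ha : a ∈ G
  · have hae : a = (e (e.symm ⟨a, ha⟩) : P) := by rw [e.apply_symm_apply]
    rcases Fin.eq_castSucc_or_eq_last (e.symm ⟨a, ha⟩) with ⟨j, hj⟩ | hj
    · rw [hj] at hae
      rw [hae, chartB_castSucc, chartA_apply]
    · rw [hj] at hae
      rw [hae, chartB_last]
      have := sum_castSucc_face n G e hx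
      show 1 - (∑ i : Fin (n+1), chartA n G e x i) = _
      simp only [chartA_apply]
      linarith
  · rw [chartB_not_mem n G e _ ha]
    by_contra h
    exact ha (hx.2.2 a fun h0 => h h0.symm)

lemma chartA_chartB (y : Euc n) : chartA n G e (chartB n G e y) = y := by
  apply PiLp.ext
  intro i
  rw [chartA_apply, chartB_castSucc]

lemma chartA_mem_Tbdry {x : P → ℝ} (hx : x ∈ bdry G) : chartA n G e x ∈ Tbdry n := by
  refine ⟨chartA_mem_Tset n G e hx.1, ?_⟩
  obtain ⟨a, haG, hxa⟩ := hx.2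
  rcases Fin.eq_castSucc_or_eq_last (e.symm ⟨a, haG⟩) with ⟨j, hj⟩ | hj
  · left
    refine ⟨j, ?_⟩
    rw [chartA_apply]
    have : (e j.castSucc : P) = a := by rw [← hj, e.apply_symm_apply]
    rw [this]; exact hxa
  · right
    have hlast : (e (Fin.last (n+1)) : P) = a := by rw [← hj, e.apply_symm_apply]
    have := sum_castSucc_face n G e hx.1
    show (∑ i : Fin (n+1), chartA n G e x i) = 1
    simp only [chartA_apply]
    rw [this, hlast, hxa]
    ring

lemma chartB_mem_bdry {y : Euc n} (hy : y ∈ Tbdry n) : chartB n G e y ∈ bdry G := by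
  refine ⟨chartB_mem_face n G e hy.1, ?_⟩
  rcases hy.2 with ⟨i, hi⟩ | hs
  · exact ⟨e i.castSucc, (e i.castSucc).2, by rw [chartB_castSucc]; exact hi⟩
  · exact ⟨e (Fin.last (n+1)), (e (Fin.last (n+1))).2, by rw [chartB_last, hs]; ring⟩

end


noncomputable section ExtendOverFace

/-- A retraction of a normed space onto its closed unit ball. -/
def ballRetract {E : Type*} [NormedAddCommGroup E] [NormedSpace ℝ E] (z : E) : E :=
  (max 1 ‖z‖)⁻¹ • z

lemma ballRetract_continuous {E : Type*} [NormedAddCommGroup E] [NormedSpace ℝ E] :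
    Continuous (ballRetract (E := E)) := by
  apply Continuous.smul
  · apply Continuous.inv₀
    · exact continuous_const.max continuous_norm
    · intro z
      have : (1:ℝ) ≤ max 1 ‖z‖ := le_max_left _ _
      linarith
  · exact continuous_id

lemma ballRetract_mem {E : Type*} [NormedAddCommGroup E] [NormedSpace ℝ E] (z : E) :
    ballRetract z ∈ Metric.closedBall (0 : E) 1 := by
  rw [Metric.mem_closedBall, dist_zero_right, ballRetract, norm_smul]
  have h1 : (1:ℝ) ≤ max 1 ‖z‖ := le_max_left _ _
  have h2 : ‖z‖ ≤ max 1 ‖z‖ := le_max_right _ _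
  rw [norm_inv, Real.norm_eq_abs, abs_of_pos (by linarith : (0:ℝ) < max 1 ‖z‖)]
  rw [inv_mul_le_iff₀ (by linarith : (0:ℝ) < max 1 ‖z‖), mul_one]
  exact h2

lemma ballRetract_eq_self {E : Type*} [NormedAddCommGroup E] [NormedSpace ℝ E] {z : E}
    (hz : ‖z‖ ≤ 1) : ballRetract z = z := by
  rw [ballRetract, max_eq_left hz, inv_one, one_smul]

variable {V : Type*} [Fintype V]

/-- Extension of a boundary map over a face, with values in a `k`-connected set. -/
lemma extend_over_face {X : Set (V → ℝ)} {k : ℕ} (hconn : KConnected X k)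
    {n : ℕ} (hn : n ≤ k) (G : Finset P) (hcard : G.card = n + 2)
    (b : (P → ℝ) → (V → ℝ)) (hb : ContinuousOn b (bdry G))
    (hbX : ∀ x ∈ bdry G, b x ∈ X) :
    ∃ d : (P → ℝ) → (V → ℝ), Continuous d ∧ (∀ x, d x ∈ X) ∧
      ∀ x ∈ bdry G, d x = b x := by
  have hcardcoe : Fintype.card {a : P // a ∈ G} = n + 2 := by
    rw [Fintype.card_coe]; exact hcard
  let e : Fin (n + 2) ≃ {a : P // a ∈ G} := (Fintype.equivFinOfCardEq hcardcoe).symm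
  -- homeomorphism between the corner simplex and the closed unit ball
  obtain ⟨h, hint, hcl, hfr⟩ := exists_homeomorph_image_interior_closure_frontier_eq_unitBall
    (convex_Tset n) (by rw [interior_Tset]; exact Tint_nonempty n) (bounded_Tset n)
  rw [(isClosed_Tset n).closure_eq] at hcl
  rw [frontier_Tset] at hfr
  -- boundary data on the sphere
  have hsymm_mem : ∀ z : Euc n, z ∈ Metric.sphere (0 : Euc n) 1 → h.symm z ∈ Tbdry n := by
    intro z hz
    rw [← hfr] at hz
    obtain ⟨w, hw, rfl⟩ := hz
    rwa [h.symm_apply_apply]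
  have hfwd_mem : ∀ w : Euc n, w ∈ Tbdry n → h w ∈ Metric.sphere (0 : Euc n) 1 := by
    intro w hw
    rw [← hfr]
    exact Set.mem_image_of_mem _ hw
  have hball_mem : ∀ w : Euc n, w ∈ Tset n → h w ∈ Metric.closedBall (0 : Euc n) 1 := by
    intro w hw
    rw [← hcl]
    exact Set.mem_image_of_mem _ hw
  have hBmem : ∀ z : Euc n, z ∈ Metric.sphere (0 : Euc n) 1 →
      chartB n G e (h.symm z) ∈ bdry G := fun z hz =>
    chartB_mem_bdry n G e (hsymm_mem z hz)
  have hfbcont : Continuous fun z : Metric.sphere (0 : Euc n) 1 =>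
      b (chartB n G e (h.symm (z : Euc n))) := by
    apply hb.comp_continuous
    · exact (chartB_continuous n G e).comp (h.symm.continuous.comp continuous_subtype_val)
    · intro z
      exact hBmem z z.2
  let fb : C(Metric.sphere (0 : Euc n) 1, X) :=
    ⟨fun z => ⟨b (chartB n G e (h.symm (z : Euc n))), hbX _ (hBmem z z.2)⟩,
     hfbcont.subtype_mk _⟩
  obtain ⟨g, hg⟩ := hconn.2 n hn fb
  refine ⟨fun x => (g ⟨ballRetract (h (chartA n G e x)), ballRetract_mem _⟩ : V → ℝ),
    ?_, ?_, ?_⟩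
  · apply continuous_subtype_val.comp
    apply g.continuous.comp
    apply Continuous.subtype_mk
    exact ballRetract_continuous.comp (h.continuous.comp (chartA_continuous n G e))
  · intro x
    exact (g _).2
  · intro x hx
    have hA : chartA n G e x ∈ Tbdry n := chartA_mem_Tbdry n G e hx
    have hsph : h (chartA n G e x) ∈ Metric.sphere (0 : Euc n) 1 := hfwd_mem _ hA
    have hnorm : ‖h (chartA n G e x)‖ ≤ 1 := by
      rw [← dist_zero_right]
      exact le_of_eq (by rwa [Metric.mem_sphere] at hsph)
    have hretr : ballRetract (h (chartA n G e x)) = h (chartA n G e x) :=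
      ballRetract_eq_self hnorm
    have harg : (⟨ballRetract (h (chartA n G e x)), ballRetract_mem _⟩ :
        Metric.closedBall (0 : Euc n) 1) =
        ⟨h (chartA n G e x), Metric.sphere_subset_closedBall hsph⟩ :=
      Subtype.ext hretr
    have h3 := hg ⟨h (chartA n G e x), hsph⟩
    calc (g ⟨ballRetract (h (chartA n G e x)), ballRetract_mem _⟩ : V → ℝ)
        = (g ⟨h (chartA n G e x), Metric.sphere_subset_closedBall hsph⟩ : V → ℝ) :=
          congrArg (fun z : Metric.closedBall (0 : Euc n) 1 => (g z : V → ℝ)) harg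
      _ = (fb ⟨h (chartA n G e x), hsph⟩ : V → ℝ) := by rw [h3]
      _ = b (chartB n G e (h.symm (h (chartA n G e x)))) := rfl
      _ = b x := by rw [h.symm_apply_apply, chartB_chartA n G e hx.1]

end ExtendOverFace

noncomputable section Main

variable {V : Type*} [Fintype V] [PartialOrder P]
variable (K : Finset V → Prop) (W : P → Set V)

/-- The realization of the induced subcomplex `K[W σ]`. -/
def Xs (σ : P) : Set (V → ℝ) :=
  realization fun F : Finset V => K F ∧ (F : Set V) ⊆ W σ

lemma Xs_mono (hWmono : ∀ σ τ : P, σ ≤ τ → W σ ⊆ W τ) {σ τ : P} (h : σ ≤ τ) :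
    Xs K W σ ⊆ Xs K W τ := by
  rintro q ⟨h1, h2, h3, h4⟩
  exact ⟨h1, h2, h3, h4.trans (hWmono σ τ h)⟩

lemma Xs_subset_realization {σ : P} : Xs K W σ ⊆ realization K := by
  rintro q ⟨h1, h2, h3, _⟩
  exact ⟨h1, h2, h3⟩

lemma Xs_act {ν : V → V} (hν : Function.Involutive ν)
    (hsimp : ∀ G : Finset V, K G → K (G.image ν))
    {νP : P → P} (hWν : ∀ σ : P, W (νP σ) = ν '' W σ)
    {σ : P} {q : V → ℝ} (hq : q ∈ Xs K W σ) : (q ∘ ν) ∈ Xs K W (νP σ) := by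
  obtain ⟨h1, h2, h3, h4⟩ := hq
  have hfilter : (Finset.univ.filter fun v => (q ∘ ν) v ≠ 0) =
      (Finset.univ.filter fun v => q v ≠ 0).image ν := filter_comp_involutive hν q
  refine ⟨fun v => h1 (ν v), ?_, ?_, ?_⟩
  · rw [show (∑ v, (q ∘ ν) v) = ∑ v, q (ν v) from rfl, sum_comp_involutive hν, h2]
  · rw [hfilter]; exact hsimp _ h3
  · rw [hfilter, hWν σ]
    intro v hv
    simp only [Finset.coe_image, Set.mem_image, Finset.mem_coe] at hv
    obtain ⟨w, hw, rfl⟩ := hv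
    exact Set.mem_image_of_mem ν (h4 (by exact_mod_cast hw))

variable {νP : P → P}

lemma comp_mem_face (hνP : Function.Involutive νP) {G : Finset P} {x : P → ℝ}
    (hx : x ∈ face G) : (x ∘ νP) ∈ face (G.image νP) := by
  refine ⟨fun a => hx.1 (νP a), ?_, ?_⟩
  · rw [show (∑ a, (x ∘ νP) a) = ∑ a, x (νP a) from rfl, sum_comp_involutive hνP, hx.2.1]
  · intro a ha
    have : νP a ∈ G := hx.2.2 (νP a) ha
    exact Finset.mem_image.2 ⟨νP a, this, hνP a⟩

lemma comp_comp_involutive {α : Type*} {g : α → α} (hg : Function.Involutive g)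
    (x : α → ℝ) : (x ∘ g) ∘ g = x := funext fun a => congrArg x (hg a)

/-- The main inductive construction of the equivariant map, skeleton by skeleton. -/
lemma main_exists
    (hdown : ∀ G G' : Finset V, G' ⊆ G → K G → K G')
    (ν : V → V) (hν : Function.Involutive ν)
    (hsimp : ∀ G : Finset V, K G → K (G.image ν))
    (hνP : Function.Involutive νP) (hνPmono : Monotone νP)
    (hPfree : ∀ G : Finset P, IsChain (· ≤ ·) (G : Set P) → G.Nonempty →
      Disjoint G (G.image νP))
    {k : ℕ}
    (hdim : ∀ G : Finset P, IsChain (· ≤ ·) (G : Set P) → G.card ≤ k + 2)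
    (hWν : ∀ σ : P, W (νP σ) = ν '' W σ)
    (hWmono : ∀ σ τ : P, σ ≤ τ → W σ ⊆ W τ)
    (hWconn : ∀ σ : P, KConnected (Xs K W σ) k) (N : ℕ) :
    ∃ F : Finset P → (P → ℝ) → (V → ℝ),
      ∀ G : Finset P, IsChain (· ≤ ·) (G : Set P) → G.Nonempty → G.card ≤ N →
        (ContinuousOn (F G) (face G)) ∧
        (∀ m ∈ G, (∀ a ∈ G, a ≤ m) → ∀ x ∈ face G, F G x ∈ Xs K W m) ∧
        (∀ H : Finset P, H ⊆ G → H.Nonempty → ∀ x ∈ face H, F G x = F H x) ∧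
        (∀ x ∈ face (G.image νP), F (G.image νP) x = (F G (x ∘ νP)) ∘ ν) := by
  induction N with
  | zero =>
    refine ⟨fun _ _ => 0, fun G _ hne hcard => absurd (Finset.card_pos.2 hne) (by omega)⟩
  | succ N ih =>
    obtain ⟨F, hF⟩ := ih
    -- direct construction on chains of cardinality exactly `N + 1`
    have hdirect : ∀ G : Finset P, ∃ d : (P → ℝ) → (V → ℝ),
        IsChain (· ≤ ·) (G : Set P) → G.card = N + 1 →
          (ContinuousOn d (face G)) ∧
          (∀ m ∈ G, (∀ a ∈ G, a ≤ m) → ∀ x ∈ face G, d x ∈ Xs K W m) ∧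
          (∀ H : Finset P, H ⊆ G → H ≠ G → H.Nonempty → ∀ x ∈ face H, d x = F H x) := by
      intro G
      by_cases hGch : IsChain (· ≤ ·) (G : Set P) ∧ G.card = N + 1
      swap
      · refine ⟨fun _ => 0, fun h1 h2 => absurd ⟨h1, h2⟩ hGch⟩
      obtain ⟨hGch, hGcard⟩ := hGch
      have hGne : G.Nonempty := Finset.card_pos.1 (by omega)
      obtain ⟨m, hmG, hmtop⟩ := chain_exists_max hGch hGne
      rcases Nat.eq_zero_or_pos N with rfl | hNpos
      · -- `G` is a single point
        obtain ⟨q₀, hq₀⟩ := (hWconn m).1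
        refine ⟨fun _ => q₀, fun _ _ => ⟨continuousOn_const, ?_, ?_⟩⟩
        · intro m' hm' htop' x _
          have hmm' : m = m' := le_antisymm (htop' m hmG) (hmtop m' hm')
          rwa [← hmm']
        · intro H hHG hHne h1 x hx
          exfalso
          apply hHne
          have : H = G := by
            apply Finset.eq_of_subset_of_card_le hHG
            have := Finset.card_pos.2 h1
            omega
          exact this
      · -- `G` has at least two points: extend over the face
        have hNk : N - 1 ≤ k := by
          have := hdim G hGch
          omega
        have hcard2 : G.card = (N - 1) + 2 := by omega
        set b : (P → ℝ) → (V → ℝ) := fun x => F (supp x) x with hbdef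
        have hfacearg : ∀ (a : P), a ∈ G → ∀ x ∈ face (G.erase a),
            b x = F (G.erase a) x := by
          intro a haG x hx
          have herase_ne : (G.erase a).Nonempty := by
            rw [← Finset.card_pos, Finset.card_erase_of_mem haG]
            omega
          have herase_ch : IsChain (· ≤ ·) ((G.erase a : Finset P) : Set P) :=
            IsChain.mono (by exact_mod_cast Finset.erase_subset a G) hGch
          have hsupp := supp_subset_of_mem_face hx
          exact ((hF (G.erase a) herase_ch herase_ne
            (by rw [Finset.card_erase_of_mem haG]; omega)).2.2.1
            (supp x) hsupp (supp_nonempty hx) x (mem_face_supp hx)).symm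
        have hbcont : ContinuousOn b (bdry G) := by
          rw [bdry_eq_iUnion]
          apply LocallyFinite.continuousOn_iUnion (locallyFinite_of_finite _)
          · intro a
            by_cases ha : a ∈ G
            · rw [if_pos ha]; exact isClosed_face _
            · rw [if_neg ha]; exact isClosed_empty
          · intro a
            by_cases ha : a ∈ G
            · rw [if_pos ha]
              have herase_ne : (G.erase a).Nonempty := by
                rw [← Finset.card_pos, Finset.card_erase_of_mem ha]; omega
              have herase_ch : IsChain (· ≤ ·) ((G.erase a : Finset P) : Set P) :=
                IsChain.mono (by exact_mod_cast Finset.erase_subset a G) hGch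
              have hcont := (hF (G.erase a) herase_ch herase_ne
                (by rw [Finset.card_erase_of_mem ha]; omega)).1
              exact hcont.congr (hfacearg a ha)
            · rw [if_neg ha]; exact continuousOn_empty _
        have hbX : ∀ x ∈ bdry G, b x ∈ Xs K W m := by
          rintro x ⟨hxf, a, haG, hxa⟩
          have hsupp := supp_subset_of_mem_face hxf
          have hsne := supp_nonempty hxf
          have hsch : IsChain (· ≤ ·) ((supp x : Finset P) : Set P) :=
            IsChain.mono (by exact_mod_cast hsupp) hGch
          obtain ⟨m', hm'S, hm'top⟩ := chain_exists_max hsch hsne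
          have hsupp' : supp x ⊆ G.erase a := by
            intro t ht
            refine Finset.mem_erase.2 ⟨?_, hsupp ht⟩
            intro h
            rw [h] at ht
            exact (mem_supp.1 ht) hxa
          have hcard' : (supp x).card ≤ N := by
            have h1 := Finset.card_le_card hsupp'
            have h2 : (G.erase a).card = N := by rw [Finset.card_erase_of_mem haG]; omega
            omega
          have := (hF (supp x) hsch hsne hcard').2.1 m' hm'S hm'top x (mem_face_supp hxf)
          exact Xs_mono K W hWmono (hmtop m' (hsupp hm'S)) this
        obtain ⟨d, hdcont, hdX, hdb⟩ := extend_over_face (hWconn m) hNk G hcard2 b hbcont hbX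
        refine ⟨d, fun _ _ => ⟨hdcont.continuousOn, ?_, ?_⟩⟩
        · intro m' hm' htop' x _
          have hmm' : m = m' := le_antisymm (htop' m hmG) (hmtop m' hm')
          rw [← hmm']; exact hdX x
        · intro H hHG hHne hHne' x hx
          have hss : H ⊂ G := Finset.ssubset_iff_subset_ne.2 ⟨hHG, hHne⟩
          obtain ⟨a, haG, haH⟩ := Finset.exists_of_ssubset hss
          have hxbdry : x ∈ bdry G := by
            refine ⟨face_mono hHG hx, a, haG, ?_⟩
            by_contra h0
            exact haH (supp_subset_of_mem_face hx (mem_supp.2 h0))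
          rw [hdb x hxbdry]
          have hHch : IsChain (· ≤ ·) ((H : Finset P) : Set P) :=
            IsChain.mono (by exact_mod_cast hHG) hGch
          have hHcard : H.card ≤ N := by
            have := Finset.card_lt_card hss
            omega
          exact ((hF H hHch hHne' hHcard).2.2.1 (supp x) (supp_subset_of_mem_face hx)
            (supp_nonempty hx) x (mem_face_supp hx)).symm
    choose dmap hdmap using hdirect
    -- the new family
    obtain ⟨F', hledef, hposdef, hnegdef⟩ : ∃ F' : Finset P → (P → ℝ) → (V → ℝ),
        (∀ G : Finset P, G.card ≤ N → F' G = F G) ∧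
        (∀ G : Finset P, ¬(G.card ≤ N) → sgn νP G = true → F' G = dmap G) ∧
        (∀ G : Finset P, ¬(G.card ≤ N) → sgn νP G = false →
          F' G = fun x => (dmap (G.image νP) (x ∘ νP)) ∘ ν) := by
      refine ⟨fun G => if G.card ≤ N then F G else
        (if sgn νP G then dmap G else fun x => (dmap (G.image νP) (x ∘ νP)) ∘ ν),
        ?_, ?_, ?_⟩
      · intro G h; simp only [if_pos h]
      · intro G h hs; simp only [if_neg h, hs, if_true]
      · intro G h hs; simp only [if_neg h, hs, Bool.false_eq_true, if_false]
    have hpre : Continuous (fun x : P → ℝ => x ∘ νP) :=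
      continuous_pi fun a => continuous_apply (νP a)
    have hpost : Continuous (fun q : V → ℝ => q ∘ ν) :=
      continuous_pi fun v => continuous_apply (ν v)
    refine ⟨F', ?_⟩
    intro G hGch hGne hGcard
    by_cases hle : G.card ≤ N
    · -- old chains: everything follows from the inductive hypothesis
      have hG := hF G hGch hGne hle
      have hG'le : (G.image νP).card ≤ N := by
        rw [Finset.card_image_of_injective _ hνP.injective]; exact hle
      rw [hledef G hle, hledef _ hG'le]
      refine ⟨hG.1, hG.2.1, ?_, hG.2.2.2⟩
      intro H hHG hHne x hx
      rw [hledef H (le_trans (Finset.card_le_card hHG) hle)]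
      exact hG.2.2.1 H hHG hHne x hx
    · have hexact : G.card = N + 1 := by omega
      set G' := G.image νP with hG'def
      have hG'ch : IsChain (· ≤ ·) ((G' : Finset P) : Set P) := image_chain hνPmono hGch
      have hG'ne : G'.Nonempty := hGne.image νP
      have hG'card : G'.card = N + 1 := by
        rw [hG'def, Finset.card_image_of_injective _ hνP.injective]; exact hexact
      have hG'nle : ¬ (G'.card ≤ N) := by omega
      have hsgnflip : sgn νP G' = ! sgn νP G :=
        sgn_flip hνP (image_ne_self hνP hPfree hGch hGne)
      have himinv : G'.image νP = G := image_image_involutive hνP G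
      have hd := hdmap G hGch hexact
      have hd' := hdmap G' hG'ch hG'card
      -- the four properties
      refine ⟨?_, ?_, ?_, ?_⟩
      · -- continuity
        rcases (Bool.eq_false_or_eq_true (sgn νP G)).symm with hsg | hsg
        · rw [hnegdef G hle hsg]
          have hmaps : Set.MapsTo (fun x : P → ℝ => x ∘ νP) (face G) (face G') :=
            fun x hx => comp_mem_face hνP hx
          exact hpost.comp_continuousOn ((hd'.1).comp hpre.continuousOn hmaps)
        · rw [hposdef G hle hsg]
          exact hd.1
      · -- values in the subcomplexes
        intro m hm htop x hx
        rcases (Bool.eq_false_or_eq_true (sgn νP G)).symm with hsg | hsg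
        · rw [hnegdef G hle hsg]
          have hm' : νP m ∈ G' := Finset.mem_image_of_mem νP hm
          have htop' : ∀ a ∈ G', a ≤ νP m := by
            intro a ha
            obtain ⟨t, htG, rfl⟩ := Finset.mem_image.1 ha
            exact hνPmono (htop t htG)
          have hx' : x ∘ νP ∈ face G' := comp_mem_face hνP hx
          have h1 : dmap G' (x ∘ νP) ∈ Xs K W (νP m) := hd'.2.1 (νP m) hm' htop' _ hx'
          have h2 := Xs_act K W hν hsimp hWν (νP := νP) h1
          rwa [hνP m] at h2
        · rw [hposdef G hle hsg]
          exact hd.2.1 m hm htop x hx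
      · -- compatibility with faces
        intro H hHG hHne x hx
        by_cases hHeq : H = G
        · subst hHeq; rfl
        · have hss : H ⊂ G := Finset.ssubset_iff_subset_ne.2 ⟨hHG, hHeq⟩
          have hHcard : H.card ≤ N := by
            have := Finset.card_lt_card hss
            omega
          have hHch : IsChain (· ≤ ·) ((H : Finset P) : Set P) :=
            IsChain.mono (by exact_mod_cast hHG) hGch
          rw [hledef H hHcard]
          rcases (Bool.eq_false_or_eq_true (sgn νP G)).symm with hsg | hsg
          · rw [hnegdef G hle hsg]
            have hH'sub : H.image νP ⊆ G' := Finset.image_subset_image hHG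
            have hH'ne : H.image νP ≠ G' := by
              intro h
              apply hHeq
              have := congrArg (Finset.image νP) h
              rw [image_image_involutive hνP H] at this
              rw [hG'def, image_image_involutive hνP G] at this
              exact this
            have hH'nonempty : (H.image νP).Nonempty := hHne.image νP
            have hx' : x ∘ νP ∈ face (H.image νP) := comp_mem_face hνP hx
            have h1 : dmap G' (x ∘ νP) = F (H.image νP) (x ∘ νP) :=
              hd'.2.2 (H.image νP) hH'sub hH'ne hH'nonempty _ hx'
            have hH := hF H hHch hHne hHcard
            have h2 : F (H.image νP) (x ∘ νP) = (F H ((x ∘ νP) ∘ νP)) ∘ ν :=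
              hH.2.2.2 (x ∘ νP) hx'
            show (dmap G' (x ∘ νP)) ∘ ν = F H x
            rw [h1, h2, comp_comp_involutive hνP x]
            exact comp_comp_involutive hν (F H x)
          · rw [hposdef G hle hsg]
            exact hd.2.2 H hHG hHeq hHne x hx
      · -- equivariance
        intro x hx
        rcases (Bool.eq_false_or_eq_true (sgn νP G)).symm with hsg | hsg
        · have hsg' : sgn νP G' = true := by rw [hsgnflip, hsg]; rfl
          rw [hposdef G' hG'nle hsg', hnegdef G hle hsg]
          show dmap G' x = ((dmap (G.image νP) ((x ∘ νP) ∘ νP)) ∘ ν) ∘ ν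
          rw [comp_comp_involutive hνP x]
          exact (comp_comp_involutive hν (dmap G' x)).symm
        · have hsg' : sgn νP G' = false := by rw [hsgnflip, hsg]; rfl
          rw [hnegdef G' hG'nle hsg', hposdef G hle hsg]
          show (dmap (G'.image νP) (x ∘ νP)) ∘ ν = (dmap G (x ∘ νP)) ∘ ν
          rw [himinv]

end Main

end EqvAux

open EqvAux

/-- Let `K` be a free ℤ₂ simplicial complex (involution `ν`), and let
`L` be the order complex of a finite ℤ₂-poset `P` (involution `νP`) of dimension
`k + 1` (all chains have at most `k + 2` elements).  Given vertex subsets `W σ ⊆ V`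
indexed by `σ ∈ P` with `W (νP σ) = ν '' W σ`, `W` monotone along the order, and each
induced subcomplex `K[W σ]` `k`-connected, there is a continuous ℤ₂-map
`f : |L| → |K|` mapping each simplex (chain) with top element `σ` into `|K[W σ]|`. -/
theorem equivariant_map_into_connected_subcomplexes
    {V P : Type*} [Fintype V] [Fintype P] [PartialOrder P] (k : ℕ)
    (K : Finset V → Prop)
    (hdown : ∀ G G' : Finset V, G' ⊆ G → K G → K G')
    (ν : V → V) (hν : Function.Involutive ν)
    (hsimp : ∀ G : Finset V, K G → K (G.image ν))
    (hfree : ∀ G : Finset V, K G → G.Nonempty → Disjoint G (G.image ν))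
    (νP : P → P) (hνP : Function.Involutive νP) (hνPmono : Monotone νP)
    (hPfree : ∀ G : Finset P, IsChain (· ≤ ·) (G : Set P) → G.Nonempty →
      Disjoint G (G.image νP))
    (hdim : ∀ G : Finset P, IsChain (· ≤ ·) (G : Set P) → G.card ≤ k + 2)
    (W : P → Set V)
    (hWν : ∀ σ : P, W (νP σ) = ν '' W σ)
    (hWmono : ∀ σ τ : P, σ ≤ τ → W σ ⊆ W τ)
    (hWconn : ∀ σ : P,
      KConnected (realization fun G : Finset V => K G ∧ (G : Set V) ⊆ W σ) k) :
    ∃ f : C(realization fun G : Finset P => IsChain (· ≤ ·) (G : Set P),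
        realization K),
      (∀ x y : realization fun G : Finset P => IsChain (· ≤ ·) (G : Set P),
        (y : P → ℝ) = (x : P → ℝ) ∘ νP →
        ((f y : V → ℝ)) = (f x : V → ℝ) ∘ ν) ∧
      (∀ x : realization fun G : Finset P => IsChain (· ≤ ·) (G : Set P),
        ∀ σ : P, (x : P → ℝ) σ ≠ 0 → (∀ τ : P, (x : P → ℝ) τ ≠ 0 → τ ≤ σ) →
          ∀ v : V, (f x : V → ℝ) v ≠ 0 → v ∈ W σ) := by
  obtain ⟨F, hF⟩ := main_exists K W hdown ν hν hsimp hνP hνPmono hPfree hdim hWν hWmono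
    (fun σ => hWconn σ) (Fintype.card P)
  set L : Set (P → ℝ) := realization fun G : Finset P => IsChain (· ≤ ·) (G : Set P) with hLdef
  have hsupp_eq : ∀ x : P → ℝ, supp x = Finset.univ.filter fun a => x a ≠ 0 := fun _ => rfl
  have hL_chain : ∀ x ∈ L, IsChain (· ≤ ·) ((supp x : Finset P) : Set P) := by
    intro x hx
    exact hx.2.2
  have hL_face : ∀ x ∈ L, x ∈ face (supp x) := by
    intro x hx
    exact ⟨hx.1, hx.2.1, fun a ha => mem_supp.2 ha⟩
  have hL_ne : ∀ x ∈ L, (supp x).Nonempty := fun x hx => supp_nonempty (hL_face x hx)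
  set f₀ : (P → ℝ) → (V → ℝ) := fun x => F (supp x) x with hf₀def
  -- membership in the target realization
  have hf₀Xs : ∀ x ∈ L, ∀ m ∈ supp x, (∀ a ∈ supp x, a ≤ m) → f₀ x ∈ Xs K W m := by
    intro x hx m hm htop
    exact (hF (supp x) (hL_chain x hx) (hL_ne x hx) (Finset.card_le_univ _)).2.1 m hm htop
      x (hL_face x hx)
  have hf₀mem : ∀ x ∈ L, f₀ x ∈ realization K := by
    intro x hx
    obtain ⟨m, hm, htop⟩ := chain_exists_max (hL_chain x hx) (hL_ne x hx)
    exact Xs_subset_realization K W (hf₀Xs x hx m hm htop)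
  -- continuity
  have hcover : L = ⋃ G : Finset P,
      (if IsChain (· ≤ ·) (G : Set P) ∧ G.Nonempty then face G else ∅) := by
    apply Set.Subset.antisymm
    · intro x hx
      refine Set.mem_iUnion.2 ⟨supp x, ?_⟩
      rw [if_pos ⟨hL_chain x hx, hL_ne x hx⟩]
      exact hL_face x hx
    · intro x hx
      obtain ⟨G, hG⟩ := Set.mem_iUnion.1 hx
      by_cases hGc : IsChain (· ≤ ·) (G : Set P) ∧ G.Nonempty
      · rw [if_pos hGc] at hG
        refine ⟨hG.1, hG.2.1, ?_⟩
        have hsub : supp x ⊆ G := supp_subset_of_mem_face hG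
        exact IsChain.mono (by exact_mod_cast hsub) hGc.1
      · rw [if_neg hGc] at hG
        exact hG.elim
  have hcont : ContinuousOn f₀ L := by
    rw [hcover]
    apply LocallyFinite.continuousOn_iUnion (locallyFinite_of_finite _)
    · intro G
      by_cases hGc : IsChain (· ≤ ·) (G : Set P) ∧ G.Nonempty
      · rw [if_pos hGc]; exact isClosed_face G
      · rw [if_neg hGc]; exact isClosed_empty
    · intro G
      by_cases hGc : IsChain (· ≤ ·) (G : Set P) ∧ G.Nonempty
      · rw [if_pos hGc]
        have hG := hF G hGc.1 hGc.2 (Finset.card_le_univ _)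
        apply hG.1.congr
        intro x hx
        exact (hG.2.2.1 (supp x) (supp_subset_of_mem_face hx) (supp_nonempty hx)
          x (mem_face_supp hx)).symm
      · rw [if_neg hGc]; exact continuousOn_empty _
  refine ⟨⟨fun x => ⟨f₀ x, hf₀mem x x.2⟩, ?_⟩, ?_, ?_⟩
  · apply Continuous.subtype_mk
    exact continuousOn_iff_continuous_restrict.mp hcont
  · -- equivariance
    intro x y hyx
    show f₀ (y : P → ℝ) = (f₀ (x : P → ℝ)) ∘ ν
    set x₀ : P → ℝ := (x : P → ℝ)
    have hx₀L : x₀ ∈ L := x.2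
    have hyL : (y : P → ℝ) ∈ L := y.2
    have hsupp_y : supp (y : P → ℝ) = (supp x₀).image νP := by
      rw [hyx]
      exact filter_comp_involutive hνP x₀
    have hyface : (y : P → ℝ) ∈ face ((supp x₀).image νP) := by
      rw [← hsupp_y]
      exact hL_face _ hyL
    have hG := hF (supp x₀) (hL_chain _ hx₀L) (hL_ne _ hx₀L) (Finset.card_le_univ _)
    have h1 : F ((supp x₀).image νP) (y : P → ℝ) =
        (F (supp x₀) ((y : P → ℝ) ∘ νP)) ∘ ν := hG.2.2.2 _ hyface
    have h2 : (y : P → ℝ) ∘ νP = x₀ := by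
      rw [hyx]
      exact comp_comp_involutive hνP x₀
    show F (supp (y : P → ℝ)) (y : P → ℝ) = (F (supp x₀) x₀) ∘ ν
    rw [hsupp_y, h1, h2]
  · -- carrier condition
    intro x σ hσ htop v hv
    have hx₀L : (x : P → ℝ) ∈ L := x.2
    have hσG : σ ∈ supp (x : P → ℝ) := mem_supp.2 hσ
    have htopG : ∀ a ∈ supp (x : P → ℝ), a ≤ σ := fun a ha => htop a (mem_supp.1 ha)
    have hXs := hf₀Xs _ hx₀L σ hσG htopG
    have hsub := hXs.2.2.2
    exact hsub (Finset.mem_coe.2 (Finset.mem_filter.2 ⟨Finset.mem_univ v, hv⟩))
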